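/- For every real c > 1 the value Φ(c) is strictly greater than Ψ(c), where Φ(c) = ((1+√((c−1)/2))²/((c−1)/2))·(x_Φ)² with x_Φ the unique root > 1 of [(1+√((c−1)/2))²x² − (c−1)/2](x−1)² − (2x−1) = 0, and Ψ(c) = ((1+√(c−1))²/(c−1))·(x_Ψ)² with x_Ψ the unique root > 1 of [(1+√(c−1))²x² − (c−1)](x−1)² − (2x−1) = 0. -/
import Mathlib


set_option maxHeartbeats 1000000 in
theorem stmt_16 (c xΦ xΨ : ℝ) (hc : 1 < c)
    (hxΦ : 1 < xΦ)
    (hΦroot : ((1 + Real.sqrt ((c-1)/2))^2 * xΦ^2 - (c-1)/2) * (xΦ-1)^2 - (2*xΦ - 1) = 0)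
    (hxΨ : 1 < xΨ)
    (hΨroot : ((1 + Real.sqrt (c-1))^2 * xΨ^2 - (c-1)) * (xΨ-1)^2 - (2*xΨ - 1) = 0) :
    ((1 + Real.sqrt (c-1))^2 / (c-1)) * xΨ^2 <
      ((1 + Real.sqrt ((c-1)/2))^2 / ((c-1)/2)) * xΦ^2 := by
  set sa := Real.sqrt ((c-1)/2) with hsa
  set sb := Real.sqrt (c-1) with hsb
  set A := (c-1)/2 with hA
  have ha : (0:ℝ) < A := by simp only [hA]; linarith
  have hb : (0:ℝ) < c-1 := by linarith
  have hsa0 : 0 < sa := Real.sqrt_pos.mpr ha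
  have hsb0 : 0 < sb := Real.sqrt_pos.mpr hb
  have hsaq : sa^2 = A := Real.sq_sqrt ha.le
  have hsbq : sb^2 = 2*A := by rw [hsb, Real.sq_sqrt hb.le]; ring
  have e1 : (1+sa)^2 = 1 + 2*sa + A := by linear_combination hsaq
  have e2 : (1+sb)^2 = 1 + 2*sb + 2*A := by linear_combination hsbq
  have hcb : c - 1 = 2*A := by rw [hA]; ring
  rw [e1] at hΦroot
  rw [e2, hcb] at hΨroot
  have hsab : sa < sb := by nlinarith [sq_nonneg (sb - sa)]
  have hP2 : (0:ℝ) < (xΦ-1)^2 := pow_pos (by linarith) 2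
  have hQ2 : (0:ℝ) < (xΨ-1)^2 := pow_pos (by linarith) 2
  -- Step 1: xΨ < xΦ
  have hlt : xΨ < xΦ := by
    by_contra hle
    push_neg at hle
    -- f(A, xΨ) < 0
    have hdiff : 0 < (2*(sb-sa)*xΨ^2 + A*xΨ^2 - A) * (xΨ-1)^2 :=
      mul_pos (by nlinarith) hQ2
    have hneg : ((1+2*sa+A)*xΨ^2 - A)*(xΨ-1)^2 - (2*xΨ-1) < 0 := by nlinarith [hΨroot, hdiff]
    -- but monotonicity forces f(A, xΨ) ≥ 0
    have h3 : ((1+2*sa+A)*xΦ^2 - A)*(xΦ-1)^2*(xΨ-1)^2 - (2*xΦ-1)*(xΨ-1)^2 = 0 := by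
      linear_combination (xΨ-1)^2 * hΦroot
    have hPQ : xΦ^2 ≤ xΨ^2 := pow_le_pow_left₀ (by linarith) hle 2
    have t1 : 0 ≤ (1+2*sa+A)*(xΨ^2-xΦ^2) * ((xΨ-1)^2*(xΦ-1)^2) :=
      mul_nonneg (mul_nonneg (by positivity) (by linarith)) (by positivity)
    have t2 : 0 ≤ (xΨ-xΦ)*(2*xΦ*xΨ - xΦ - xΨ) :=
      mul_nonneg (by linarith) (by nlinarith)
    have key : (((1+2*sa+A)*xΨ^2 - A)*(xΨ-1)^2 - (2*xΨ-1)) * (xΦ-1)^2 =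
        (1+2*sa+A)*(xΨ^2-xΦ^2)*((xΨ-1)^2*(xΦ-1)^2) + (xΨ-xΦ)*(2*xΦ*xΨ - xΦ - xΨ)
          + (((1+2*sa+A)*xΦ^2 - A)*(xΦ-1)^2*(xΨ-1)^2 - (2*xΦ-1)*(xΨ-1)^2) := by ring
    have hmono : 0 ≤ (((1+2*sa+A)*xΨ^2 - A)*(xΨ-1)^2 - (2*xΨ-1)) * (xΦ-1)^2 := by
      rw [key]; linarith
    nlinarith [mul_neg_of_neg_of_pos hneg hP2]
  -- Step 2: combine
  rw [div_mul_eq_mul_div, div_mul_eq_mul_div, div_lt_div_iff₀ hb ha, e1, e2, hcb]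
  have hcoef : 1 + 2*sb + 2*A < 2*(1 + 2*sa + A) := by nlinarith
  have hq : xΨ^2 < xΦ^2 := by nlinarith
  have s1 : (1+2*sb+2*A)*xΨ^2 < (1+2*sb+2*A)*xΦ^2 :=
    mul_lt_mul_of_pos_left hq (by positivity)
  have s2 : (1+2*sb+2*A)*xΦ^2 < 2*(1+2*sa+A)*xΦ^2 :=
    mul_lt_mul_of_pos_right hcoef (by positivity)
  have s3 := mul_lt_mul_of_pos_right (s1.trans s2) ha
  nlinarith [s3]
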